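/- Let L be the Schrödinger-Virasoro algebra, V = L⊗L with adjoint diagonal action, and D the 6-dimensional space of derivations defined by D(L_n) = (nα+γ)M_0⊗M_n + (nα†+γ†)M_n⊗M_0, D(Y_{n−1/2}) = βM_0⊗Y_{n−1/2} + β†Y_{n−1/2}⊗M_0, D(M_n) = 2(βM_0⊗M_n + β†M_n⊗M_0). Then Inn(L,V) ∩ D = {0}: no nonzero element of D is an inner derivation. -/

import Mathlib

open TensorProduct

/-- Index set for the basis of the Schrödinger–Virasoro algebra:
`Sum.inl n ↔ L_n`, `Sum.inr (Sum.inl n) ↔ Y_{n+1/2}`, `Sum.inr (Sum.inr n) ↔ M_n`. -/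
abbrev SVIx : Type := ℤ ⊕ ℤ ⊕ ℤ

variable (F : Type) [Field F] [CharZero F]

/-- Underlying space of the Schrödinger–Virasoro algebra: the free `F`-module on `SVIx`. -/
abbrev SVL := SVIx →₀ F

noncomputable def Lb (n : ℤ) : SVL F := Finsupp.single (Sum.inl n) 1
noncomputable def Yb (n : ℤ) : SVL F := Finsupp.single (Sum.inr (Sum.inl n)) 1
noncomputable def Mb (n : ℤ) : SVL F := Finsupp.single (Sum.inr (Sum.inr n)) 1

/-- The bracket of basis vectors.  Here `Yb n` stands for `Y_{n+1/2}`, so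
`[L_m, Y_{n+1/2}] = ((n+1/2) - m/2) Y_{m+n+1/2}` and
`[Y_{a+1/2}, Y_{b+1/2}] = (b-a) M_{a+b+1}`; all other brackets vanish. -/
noncomputable def brIx : SVIx → SVIx → SVL F
  | Sum.inl m, Sum.inl n => ((n - m : ℤ) : F) • Lb F (m + n)
  | Sum.inl m, Sum.inr (Sum.inl n) => (((2*n + 1 - m : ℤ) : F) / 2) • Yb F (m + n)
  | Sum.inl m, Sum.inr (Sum.inr n) => ((n : ℤ) : F) • Mb F (m + n)
  | Sum.inr (Sum.inl n), Sum.inl m => -((((2*n + 1 - m : ℤ) : F) / 2) • Yb F (m + n))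
  | Sum.inr (Sum.inl a), Sum.inr (Sum.inl b) => ((b - a : ℤ) : F) • Mb F (a + b + 1)
  | Sum.inr (Sum.inr n), Sum.inl m => -(((n : ℤ) : F) • Mb F (m + n))
  | _, _ => 0

/-- The bracket of the Schrödinger–Virasoro algebra: the bilinear extension of `brIx`. -/
noncomputable def bk : SVL F →ₗ[F] SVL F →ₗ[F] SVL F :=
  Finsupp.lsum F fun i => LinearMap.toSpanSingleton F (SVL F →ₗ[F] SVL F)
    (Finsupp.lsum F fun j => LinearMap.toSpanSingleton F (SVL F) (brIx F i j))

abbrev VV := SVL F ⊗[F] SVL F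

noncomputable instance : AddCommGroup (VV F) := inferInstance

noncomputable instance : Zero (VV F) :=
  ((inferInstanceAs (AddCommMonoid (VV F)) : AddCommMonoid (VV F))).toAddMonoid.toZero

/-- The adjoint diagonal action of `L` on `L ⊗ L`, as a bilinear map:
`x · (a ⊗ b) = [x,a] ⊗ b + a ⊗ [x,b]`. -/
noncomputable def adVb : SVL F →ₗ[F] VV F →ₗ[F] VV F :=
  ((LinearMap.rTensorHom (SVL F) : (SVL F →ₗ[F] SVL F) →ₗ[F] (VV F →ₗ[F] VV F)) ∘ₗ bk F)
    + ((LinearMap.lTensorHom (SVL F) : (SVL F →ₗ[F] SVL F) →ₗ[F] (VV F →ₗ[F] VV F)) ∘ₗ bk F)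

/-- The twist map `τ(x ⊗ y) = y ⊗ x`. -/
noncomputable def tau : VV F →ₗ[F] VV F := (TensorProduct.comm F (SVL F) (SVL F)).toLinearMap

/-- The map `1 - τ`. -/
noncomputable def oneMinusTau : VV F →ₗ[F] VV F where
  toFun v := v - tau F v
  map_add' x y := by
    simp only [map_add]; exact sub_add_sub_comm x (tau F x) y (tau F y) ▸ rfl
  map_smul' c x := by simp only [map_smul, RingHom.id_apply, smul_sub]

/-- `Im (1 - τ) ⊂ L ⊗ L`. -/
noncomputable def skewIm : Submodule F (VV F) := LinearMap.range (oneMinusTau F)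
/-- Values on basis elements of the special derivations `D` with parameters
`(α, α†, β, β†, γ, γ†)`:  `D(L_n) = (nα+γ) M₀⊗M_n + (nα†+γ†) M_n⊗M₀`,
`D(Y_{n+1/2}) = β M₀⊗Y_{n+1/2} + β† Y_{n+1/2}⊗M₀`, `D(M_n) = 2(β M₀⊗M_n + β† M_n⊗M₀)`. -/
noncomputable def dval (a a' b b' c c' : F) : SVIx → VV F
  | Sum.inl n => (((n : ℤ) : F) * a + c) • (Mb F 0 ⊗ₜ[F] Mb F n)
      + (((n : ℤ) : F) * a' + c') • (Mb F n ⊗ₜ[F] Mb F 0)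
  | Sum.inr (Sum.inl n) => b • (Mb F 0 ⊗ₜ[F] Yb F n) + b' • (Yb F n ⊗ₜ[F] Mb F 0)
  | Sum.inr (Sum.inr n) => (2 * b) • (Mb F 0 ⊗ₜ[F] Mb F n) + (2 * b') • (Mb F n ⊗ₜ[F] Mb F 0)

/-- The special derivation with parameters `(α, α†, β, β†, γ, γ†)`. -/
noncomputable def Dmap (a a' b b' c c' : F) : SVL F →ₗ[F] VV F :=
  Finsupp.lsum F fun i => LinearMap.toSpanSingleton F (VV F) (dval F a a' b b' c c' i)

/-- `D` is a derivation from `L` to the `L`-module `L ⊗ L`. -/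
def IsDer (D : SVL F →ₗ[F] VV F) : Prop :=
  ∀ x y : SVL F, D (bk F x y) = adVb F x (D y) - adVb F y (D x)

set_option linter.unusedSectionVars false
-- auxiliary lemmas
noncomputable def cf (k : SVIx) : SVL F →ₗ[F] F := Finsupp.lapply k

noncomputable def phi (i j : SVIx) : VV F →ₗ[F] F :=
  (Finsupp.lapply (i,j)) ∘ₗ (finsuppTensorFinsupp' F SVIx SVIx).toLinearMap

lemma phi_tmul (i j : SVIx) (x y : SVL F) : phi F i j (x ⊗ₜ[F] y) = x i * y j := by
  simp [phi, finsuppTensorFinsupp'_apply_apply]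

lemma bk_single (i j : SVIx) (s t : F) :
    bk F (Finsupp.single i s) (Finsupp.single j t) = (s * t) • brIx F i j := by
  simp [bk, Finsupp.lsum_single, LinearMap.toSpanSingleton_apply, mul_smul, mul_comm]

set_option linter.unusedSectionVars false

lemma cf_bk_L_M0 (n : ℤ) :
    (cf F (Sum.inr (Sum.inr 0))) ∘ₗ bk F (Lb F n)
      = ((-n : ℤ) : F) • cf F (Sum.inr (Sum.inr (-n))) := by
  refine Finsupp.lhom_ext fun j t => ?_
  simp only [LinearMap.comp_apply, Lb, bk_single, LinearMap.smul_apply, map_smul, one_mul]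
  rcases j with m | m | m <;>
    simp [brIx, cf, Lb, Yb, Mb, Finsupp.single_apply, smul_eq_mul] <;>
    (try split_ifs) <;> first | omega | (subst_vars; push_cast; ring)

lemma cf_bk_L_Mn (n : ℤ) :
    (cf F (Sum.inr (Sum.inr n))) ∘ₗ bk F (Lb F n) = 0 := by
  refine Finsupp.lhom_ext fun j t => ?_
  simp only [LinearMap.comp_apply, Lb, bk_single, LinearMap.smul_apply, map_smul, one_mul]
  rcases j with m | m | m <;>
    simp [brIx, cf, Lb, Yb, Mb, Finsupp.single_apply, smul_eq_mul] <;>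
    (try split_ifs) <;> first | omega | (subst_vars; push_cast; ring) | tauto

lemma cf_bk_M_M0 (n : ℤ) :
    (cf F (Sum.inr (Sum.inr 0))) ∘ₗ bk F (Mb F n)
      = ((-n : ℤ) : F) • cf F (Sum.inl (-n)) := by
  refine Finsupp.lhom_ext fun j t => ?_
  simp only [LinearMap.comp_apply, Mb, bk_single, LinearMap.smul_apply, map_smul, one_mul]
  rcases j with m | m | m <;>
    simp [brIx, cf, Lb, Yb, Mb, Finsupp.single_apply, smul_eq_mul] <;>
    (try split_ifs) <;> first | omega | (subst_vars; push_cast; ring) | tauto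

lemma cf_bk_M_Mn (n : ℤ) :
    (cf F (Sum.inr (Sum.inr n))) ∘ₗ bk F (Mb F n)
      = ((-n : ℤ) : F) • cf F (Sum.inl 0) := by
  refine Finsupp.lhom_ext fun j t => ?_
  simp only [LinearMap.comp_apply, Mb, bk_single, LinearMap.smul_apply, map_smul, one_mul]
  rcases j with m | m | m <;>
    simp [brIx, cf, Lb, Yb, Mb, Finsupp.single_apply, smul_eq_mul] <;>
    (try split_ifs) <;> first | omega | (subst_vars; push_cast; ring) | tauto

lemma phi_rTensor (g : SVL F →ₗ[F] SVL F) (i i' j : SVIx) (e : F)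
    (h : cf F i ∘ₗ g = e • cf F i') (v : VV F) :
    phi F i j (LinearMap.rTensor (SVL F) g v) = e * phi F i' j v := by
  have key : phi F i j ∘ₗ LinearMap.rTensor (SVL F) g = e • phi F i' j := by
    apply TensorProduct.ext'
    intro x y
    have hx : (g x) i = e * x i' := by
      have := congrArg (fun f => f x) h
      simpa [cf] using this
    simp [phi_tmul, hx, mul_assoc]
  have := congrArg (fun f => f v) key
  simpa using this

lemma phi_lTensor (g : SVL F →ₗ[F] SVL F) (i j j' : SVIx) (e : F)
    (h : cf F j ∘ₗ g = e • cf F j') (v : VV F) :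
    phi F i j (LinearMap.lTensor (SVL F) g v) = e * phi F i j' v := by
  have key : phi F i j ∘ₗ LinearMap.lTensor (SVL F) g = e • phi F i j' := by
    apply TensorProduct.ext'
    intro x y
    have hy : (g y) j = e * y j' := by
      have := congrArg (fun f => f y) h
      simpa [cf] using this
    simp [phi_tmul, hy]; ring
  have := congrArg (fun f => f v) key
  simpa using this

lemma adVb_apply (x : SVL F) (v : VV F) :
    adVb F x v = LinearMap.rTensor (SVL F) (bk F x) v
      + LinearMap.lTensor (SVL F) (bk F x) v := by
  simp [adVb, LinearMap.rTensorHom, LinearMap.lTensorHom]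

lemma Dmap_single (a a' b b' c c' : F) (i : SVIx) :
    Dmap F a a' b b' c c' (Finsupp.single i 1) = dval F a a' b b' c c' i := by
  simp [Dmap, Finsupp.lsum_single, LinearMap.toSpanSingleton_apply]

lemma eqn_L (a a' b b' c c' : F) (v : VV F)
    (hv : ∀ x, Dmap F a a' b b' c c' x = adVb F x v) (n : ℤ) (hn : n ≠ 0) :
    ((n:ℤ):F) * a + c
      = ((-n : ℤ):F) * phi F (Sum.inr (Sum.inr (-n))) (Sum.inr (Sum.inr n)) v := by
  have h1 : Dmap F a a' b b' c c' (Lb F n) = adVb F (Lb F n) v := hv _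
  have h2 := congrArg (phi F (Sum.inr (Sum.inr 0)) (Sum.inr (Sum.inr n))) h1
  rw [adVb_apply, map_add,
      phi_rTensor F _ _ _ _ _ (cf_bk_L_M0 F n),
      phi_lTensor F _ _ _ (Sum.inr (Sum.inr n)) 0 (by rw [cf_bk_L_Mn]; simp)] at h2
  rw [Lb, Dmap_single] at h2
  simp only [dval, map_add, map_smul, phi_tmul, Mb, Finsupp.single_apply,
    smul_eq_mul, hn, Ne.symm hn] at h2
  simpa [hn, Ne.symm hn] using h2

lemma eqn_L' (a a' b b' c c' : F) (v : VV F)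
    (hv : ∀ x, Dmap F a a' b b' c c' x = adVb F x v) (n : ℤ) (hn : n ≠ 0) :
    ((n:ℤ):F) * a' + c'
      = ((-n : ℤ):F) * phi F (Sum.inr (Sum.inr n)) (Sum.inr (Sum.inr (-n))) v := by
  have h1 : Dmap F a a' b b' c c' (Lb F n) = adVb F (Lb F n) v := hv _
  have h2 := congrArg (phi F (Sum.inr (Sum.inr n)) (Sum.inr (Sum.inr 0))) h1
  rw [adVb_apply, map_add,
      phi_rTensor F _ _ (Sum.inr (Sum.inr n)) _ 0 (by rw [cf_bk_L_Mn]; simp),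
      phi_lTensor F _ _ _ _ _ (cf_bk_L_M0 F n)] at h2
  rw [Lb, Dmap_single] at h2
  simp only [dval, map_add, map_smul, phi_tmul, Mb, Finsupp.single_apply,
    smul_eq_mul, hn, Ne.symm hn] at h2
  simpa [hn, Ne.symm hn] using h2

lemma eqn_M (a a' b b' c c' : F) (v : VV F)
    (hv : ∀ x, Dmap F a a' b b' c c' x = adVb F x v) (n : ℤ) (hn : n ≠ 0) :
    2 * b = ((-n : ℤ):F) * phi F (Sum.inl (-n)) (Sum.inr (Sum.inr n)) v
      + ((-n : ℤ):F) * phi F (Sum.inr (Sum.inr 0)) (Sum.inl 0) v := by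
  have h1 : Dmap F a a' b b' c c' (Mb F n) = adVb F (Mb F n) v := hv _
  have h2 := congrArg (phi F (Sum.inr (Sum.inr 0)) (Sum.inr (Sum.inr n))) h1
  rw [adVb_apply, map_add,
      phi_rTensor F _ _ _ _ _ (cf_bk_M_M0 F n),
      phi_lTensor F _ _ _ _ _ (cf_bk_M_Mn F n)] at h2
  rw [Mb, Dmap_single] at h2
  simp only [dval, map_add, map_smul, phi_tmul, Mb, Finsupp.single_apply,
    smul_eq_mul, hn, Ne.symm hn] at h2
  simpa [hn, Ne.symm hn] using h2

lemma eqn_M' (a a' b b' c c' : F) (v : VV F)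
    (hv : ∀ x, Dmap F a a' b b' c c' x = adVb F x v) (n : ℤ) (hn : n ≠ 0) :
    2 * b' = ((-n : ℤ):F) * phi F (Sum.inl 0) (Sum.inr (Sum.inr 0)) v
      + ((-n : ℤ):F) * phi F (Sum.inr (Sum.inr n)) (Sum.inl (-n)) v := by
  have h1 : Dmap F a a' b b' c c' (Mb F n) = adVb F (Mb F n) v := hv _
  have h2 := congrArg (phi F (Sum.inr (Sum.inr n)) (Sum.inr (Sum.inr 0))) h1
  rw [adVb_apply, map_add,
      phi_rTensor F _ _ _ _ _ (cf_bk_M_Mn F n),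
      phi_lTensor F _ _ _ _ _ (cf_bk_M_M0 F n)] at h2
  rw [Mb, Dmap_single] at h2
  simp only [dval, map_add, map_smul, phi_tmul, Mb, Finsupp.single_apply,
    smul_eq_mul, hn, Ne.symm hn] at h2
  simpa [hn, Ne.symm hn] using h2

/-- A size function on indices. -/
def nrm : SVIx → ℕ
  | Sum.inl m => m.natAbs
  | Sum.inr (Sum.inl m) => m.natAbs
  | Sum.inr (Sum.inr m) => m.natAbs

lemma exists_bound (v : VV F) :
    ∃ B : ℕ, ∀ i j : SVIx, B < max (nrm i) (nrm j) → phi F i j v = 0 := by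
  set T := finsuppTensorFinsupp' F SVIx SVIx v with hT
  refine ⟨T.support.sup (fun p => max (nrm p.1) (nrm p.2)), fun i j h => ?_⟩
  by_contra hne
  have hmem : (i, j) ∈ T.support := Finsupp.mem_support_iff.2 (by simpa [phi, hT] using hne)
  have := Finset.le_sup (f := fun p : SVIx × SVIx => max (nrm p.1) (nrm p.2)) hmem
  simp only at this
  omega

/-- No nonzero element of the six-parameter family `Dmap` is an inner derivation:
`Inn(L, L⊗L) ∩ 𝒟 = 0`. -/
theorem sv_inn_inter_D_eq_bot :
    ∀ (a a' b b' c c' : F) (v : VV F),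
      (∀ x : SVL F, Dmap F a a' b b' c c' x = adVb F x v) →
      Dmap F a a' b b' c c' = 0 := by
  intro a a' b b' c c' v hv
  obtain ⟨B, hB⟩ := exists_bound F v
  have hn1 : ((B : ℤ) + 1) ≠ 0 := by omega
  have hn2 : ((B : ℤ) + 2) ≠ 0 := by omega
  -- a and c
  have h1 : (((B : ℤ) + 1 : ℤ) : F) * a + c = 0 := by
    rw [eqn_L F a a' b b' c c' v hv ((B : ℤ) + 1) hn1,
      hB _ _ (by simp [nrm]; omega)]; ring
  have h2 : (((B : ℤ) + 2 : ℤ) : F) * a + c = 0 := by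
    rw [eqn_L F a a' b b' c c' v hv ((B : ℤ) + 2) hn2,
      hB _ _ (by simp [nrm]; omega)]; ring
  push_cast at h1 h2
  have ha : a = 0 := by linear_combination h2 - h1
  have hc : c = 0 := by linear_combination ((B : F) + 2) * h1 - ((B : F) + 1) * h2
  -- a' and c'
  have h1' : (((B : ℤ) + 1 : ℤ) : F) * a' + c' = 0 := by
    rw [eqn_L' F a a' b b' c c' v hv ((B : ℤ) + 1) hn1,
      hB _ _ (by simp [nrm]; omega)]; ring
  have h2' : (((B : ℤ) + 2 : ℤ) : F) * a' + c' = 0 := by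
    rw [eqn_L' F a a' b b' c c' v hv ((B : ℤ) + 2) hn2,
      hB _ _ (by simp [nrm]; omega)]; ring
  push_cast at h1' h2'
  have ha' : a' = 0 := by linear_combination h2' - h1'
  have hc' : c' = 0 := by linear_combination ((B : F) + 2) * h1' - ((B : F) + 1) * h2'
  -- b
  have h3 : 2 * b = ((-( (B : ℤ) + 1) : ℤ) : F)
      * phi F (Sum.inr (Sum.inr 0)) (Sum.inl 0) v := by
    rw [eqn_M F a a' b b' c c' v hv ((B : ℤ) + 1) hn1,
      hB _ _ (by simp [nrm]; omega)]; ring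
  have h4 : 2 * b = ((-( (B : ℤ) + 2) : ℤ) : F)
      * phi F (Sum.inr (Sum.inr 0)) (Sum.inl 0) v := by
    rw [eqn_M F a a' b b' c c' v hv ((B : ℤ) + 2) hn2,
      hB _ _ (by simp [nrm]; omega)]; ring
  push_cast at h3 h4
  have hb : b = 0 := by
    have hu : phi F (Sum.inr (Sum.inr 0)) (Sum.inl 0) v = 0 := by
      linear_combination h4 - h3
    linear_combination h3 / 2 - ((B : F) + 1) / 2 * hu
  -- b'
  have h3' : 2 * b' = ((-( (B : ℤ) + 1) : ℤ) : F)
      * phi F (Sum.inl 0) (Sum.inr (Sum.inr 0)) v := by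
    rw [eqn_M' F a a' b b' c c' v hv ((B : ℤ) + 1) hn1,
      hB (Sum.inr (Sum.inr ((B : ℤ) + 1))) (Sum.inl (-((B : ℤ) + 1)))
        (by simp [nrm]; omega)]; ring
  have h4' : 2 * b' = ((-( (B : ℤ) + 2) : ℤ) : F)
      * phi F (Sum.inl 0) (Sum.inr (Sum.inr 0)) v := by
    rw [eqn_M' F a a' b b' c c' v hv ((B : ℤ) + 2) hn2,
      hB (Sum.inr (Sum.inr ((B : ℤ) + 2))) (Sum.inl (-((B : ℤ) + 2)))
        (by simp [nrm]; omega)]; ring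
  push_cast at h3' h4'
  have hb' : b' = 0 := by
    have hu : phi F (Sum.inl 0) (Sum.inr (Sum.inr 0)) v = 0 := by
      linear_combination h4' - h3'
    linear_combination h3' / 2 - ((B : F) + 1) / 2 * hu
  rw [ha, ha', hb, hb', hc, hc']
  refine Finsupp.lhom_ext fun i s => ?_
  rcases i with m | m | m <;>
    simp [Dmap, dval, Finsupp.lsum_single, LinearMap.toSpanSingleton_apply]
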